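/- Let a and b be distinct positive real numbers. Then A_2(a,b) < S(a,b) < √2 · A_2(a,b), where A_2(a,b) = ((a² + b²)/2)^(1/2) is the power mean of order 2 and S(a,b) = (a^a · b^b)^(1/(a+b)). -/

import Mathlib

lemma aux1 {t : ℝ} (h0 : 0 ≤ t) (h1 : t < 1) :
    2 * t ≤ Real.log (1 + t) - Real.log (1 - t) := by
  have key : StrictMonoOn (fun x : ℝ => Real.log (1 + x) - Real.log (1 - x) - 2 * x)
      (Set.Ico 0 1) := by
    apply strictMonoOn_of_deriv_pos (convex_Ico 0 1)
    · apply ContinuousOn.sub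
      apply ContinuousOn.sub
      · exact ContinuousOn.log (by fun_prop) (fun x hx => by
          have := hx.1; intro h; nlinarith [hx.1, hx.2])
      · exact ContinuousOn.log (by fun_prop) (fun x hx => by
          have := hx.2; intro h; nlinarith [hx.1, hx.2])
      · fun_prop
    · intro x hx
      rw [interior_Ico] at hx
      obtain ⟨hx0, hx1⟩ := hx
      have h1x : (0:ℝ) < 1 + x := by linarith
      have h2x : (0:ℝ) < 1 - x := by linarith
      have d1 : HasDerivAt (fun x : ℝ => Real.log (1 + x)) (1 / (1 + x)) x :=
        ((hasDerivAt_id x).const_add 1).log h1x.ne'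
      have d2 : HasDerivAt (fun x : ℝ => Real.log (1 - x)) ((-1) / (1 - x)) x :=
        ((hasDerivAt_id x).const_sub 1).log h2x.ne'
      have d3 : HasDerivAt (fun x : ℝ => 2 * x) 2 x := by
        simpa using (hasDerivAt_id x).const_mul 2
      have hd := (d1.sub d2).sub d3
      erw [hd.deriv]
      have : 1 / (1 + x) - (-1) / (1 - x) - 2 = 2 * x ^ 2 / ((1 + x) * (1 - x)) := by
        field_simp; ring
      rw [this]; positivity
  rcases eq_or_lt_of_le h0 with h | h
  · simp [← h]
  · have := key (Set.mem_Ico.mpr ⟨le_refl 0, one_pos⟩) (Set.mem_Ico.mpr ⟨h0, h1⟩) h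
    simp only [Real.log_one] at this
    norm_num at this
    linarith

lemma aux2 {t : ℝ} (h0 : 0 < t) (h1 : t < 1) :
    Real.log (1 + t ^ 2) < (1 + t) * Real.log (1 + t) + (1 - t) * Real.log (1 - t) := by
  have key : StrictMonoOn (fun x : ℝ =>
      (1 + x) * Real.log (1 + x) + (1 - x) * Real.log (1 - x) - Real.log (1 + x ^ 2))
      (Set.Ico 0 1) := by
    apply strictMonoOn_of_deriv_pos (convex_Ico 0 1)
    · apply ContinuousOn.sub
      apply ContinuousOn.add
      · exact ContinuousOn.mul (by fun_prop)
          (ContinuousOn.log (by fun_prop) (fun x hx => by intro h; nlinarith [hx.1, hx.2]))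
      · exact ContinuousOn.mul (by fun_prop)
          (ContinuousOn.log (by fun_prop) (fun x hx => by intro h; nlinarith [hx.1, hx.2]))
      · exact ContinuousOn.log (by fun_prop) (fun x hx => by intro h; nlinarith [hx.1, hx.2, sq_nonneg x])
    · intro x hx
      rw [interior_Ico] at hx
      obtain ⟨hx0, hx1⟩ := hx
      have h1x : (0:ℝ) < 1 + x := by linarith
      have h2x : (0:ℝ) < 1 - x := by linarith
      have h3x : (0:ℝ) < 1 + x ^ 2 := by positivity
      have dl1 : HasDerivAt (fun x : ℝ => Real.log (1 + x)) (1 / (1 + x)) x :=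
        ((hasDerivAt_id x).const_add 1).log h1x.ne'
      have dl2 : HasDerivAt (fun x : ℝ => Real.log (1 - x)) ((-1) / (1 - x)) x :=
        ((hasDerivAt_id x).const_sub 1).log h2x.ne'
      have dq : HasDerivAt (fun x : ℝ => 1 + x ^ 2) (2 * x) x := by
        simpa using (hasDerivAt_pow 2 x).const_add 1
      have dl3 : HasDerivAt (fun x : ℝ => Real.log (1 + x ^ 2)) (2 * x / (1 + x ^ 2)) x :=
        dq.log h3x.ne'
      have da : HasDerivAt (fun x : ℝ => 1 + x) 1 x := (hasDerivAt_id x).const_add 1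
      have db : HasDerivAt (fun x : ℝ => 1 - x) (-1) x := (hasDerivAt_id x).const_sub 1
      have d1 : HasDerivAt (fun x : ℝ => (1 + x) * Real.log (1 + x))
          (1 * Real.log (1 + x) + (1 + x) * (1 / (1 + x))) x := da.mul dl1
      have d2 : HasDerivAt (fun x : ℝ => (1 - x) * Real.log (1 - x))
          ((-1) * Real.log (1 - x) + (1 - x) * ((-1) / (1 - x))) x := db.mul dl2
      have hd := (d1.add d2).sub dl3
      erw [hd.deriv]
      have e1 : (1 + x) * (1 / (1 + x)) = 1 := by field_simp
      have e2 : (1 - x) * ((-1) / (1 - x)) = -1 := by field_simp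
      rw [e1, e2]
      have hlog := aux1 hx0.le hx1
      have hfrac : 2 * x / (1 + x ^ 2) < 2 * x := by
        rw [div_lt_iff₀ h3x]; nlinarith [pow_pos hx0 3]
      linarith
  have := key (Set.mem_Ico.mpr ⟨le_refl 0, one_pos⟩) (Set.mem_Ico.mpr ⟨h0.le, h1⟩) h0
  norm_num at this
  linarith

lemma main_half (a b : ℝ) (ha : 0 < a) (hb : 0 < b) (hba : b < a) :
    ((a ^ 2 + b ^ 2) / 2) ^ ((1 : ℝ) / 2) < (a ^ a * b ^ b) ^ (1 / (a + b)) ∧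
      (a ^ a * b ^ b) ^ (1 / (a + b)) <
        Real.sqrt 2 * ((a ^ 2 + b ^ 2) / 2) ^ ((1 : ℝ) / 2) := by
  have hs : (0:ℝ) < a + b := by linarith
  have hq : (0:ℝ) < (a ^ 2 + b ^ 2) / 2 := by positivity
  have hS : (0:ℝ) < a ^ a * b ^ b := by
    exact mul_pos (Real.rpow_pos_of_pos ha a) (Real.rpow_pos_of_pos hb b)
  have hA : (0:ℝ) < ((a ^ 2 + b ^ 2) / 2) ^ ((1:ℝ)/2) := Real.rpow_pos_of_pos hq _
  have hSS : (0:ℝ) < (a ^ a * b ^ b) ^ (1 / (a + b)) := Real.rpow_pos_of_pos hS _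
  have logS : Real.log ((a ^ a * b ^ b) ^ (1 / (a + b)))
      = (1 / (a + b)) * (a * Real.log a + b * Real.log b) := by
    rw [Real.log_rpow hS, Real.log_mul (Real.rpow_pos_of_pos ha a).ne'
      (Real.rpow_pos_of_pos hb b).ne', Real.log_rpow ha, Real.log_rpow hb]
  have logA : Real.log (((a ^ 2 + b ^ 2) / 2) ^ ((1:ℝ)/2))
      = (1/2) * Real.log ((a ^ 2 + b ^ 2) / 2) := Real.log_rpow hq _
  constructor
  · -- lower bound
    rw [← Real.log_lt_log_iff hA hSS, logS, logA]
    obtain ⟨t, htdef⟩ : ∃ t : ℝ, t = (a - b) / (a + b) := ⟨_, rfl⟩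
    have ht0 : 0 < t := by rw [htdef]; apply div_pos <;> linarith
    have ht1 : t < 1 := by rw [htdef, div_lt_one hs]; linarith
    have hsh : (0:ℝ) < (a + b) / 2 := by linarith
    have e1 : 1 + t = a / ((a + b) / 2) := by rw [htdef]; field_simp; ring
    have e2 : 1 - t = b / ((a + b) / 2) := by rw [htdef]; field_simp; ring
    have e3 : (a ^ 2 + b ^ 2) / 2 = ((a + b) / 2) ^ 2 * (1 + t ^ 2) := by
      rw [htdef]; field_simp; ring
    have f1 : Real.log (1 + t) = Real.log a - Real.log ((a + b) / 2) := by
      rw [e1, Real.log_div ha.ne' hsh.ne']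
    have f2 : Real.log (1 - t) = Real.log b - Real.log ((a + b) / 2) := by
      rw [e2, Real.log_div hb.ne' hsh.ne']
    have f3 : Real.log ((a ^ 2 + b ^ 2) / 2)
        = 2 * Real.log ((a + b) / 2) + Real.log (1 + t ^ 2) := by
      rw [e3, Real.log_mul (by positivity) (by positivity), Real.log_pow]
      norm_num
    have key := aux2 ht0 ht1
    rw [f1, f2] at key
    have ea : a = (a + b) / 2 * (1 + t) := by rw [htdef]; field_simp; ring
    have eb : b = (a + b) / 2 * (1 - t) := by rw [htdef]; field_simp; ring
    rw [f3]
    rw [show (1 / (a + b)) * (a * Real.log a + b * Real.log b)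
        = (a * Real.log a + b * Real.log b) / (a + b) by ring, lt_div_iff₀ hs]
    have hkey2 := mul_lt_mul_of_pos_left key hsh
    have hrhs : (a + b) / 2 * ((1 + t) * (Real.log a - Real.log ((a + b) / 2))
        + (1 - t) * (Real.log b - Real.log ((a + b) / 2)))
        = a * (Real.log a - Real.log ((a + b) / 2))
        + b * (Real.log b - Real.log ((a + b) / 2)) := by
      linear_combination (-(Real.log a - Real.log ((a + b) / 2))) * ea
        + (-(Real.log b - Real.log ((a + b) / 2))) * eb
    rw [hrhs] at hkey2
    nlinarith [hkey2]
  · -- upper bound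
    have hrw : Real.sqrt 2 * ((a ^ 2 + b ^ 2) / 2) ^ ((1:ℝ)/2)
        = (a ^ 2 + b ^ 2) ^ ((1:ℝ)/2) := by
      rw [Real.sqrt_eq_rpow, ← Real.mul_rpow (by norm_num) hq.le]
      congr 1
      ring
    rw [hrw]
    have hq2 : (0:ℝ) < a ^ 2 + b ^ 2 := by positivity
    rw [← Real.log_lt_log_iff hSS (Real.rpow_pos_of_pos hq2 _), logS,
      Real.log_rpow hq2]
    have hlab : Real.log b < Real.log a := Real.log_lt_log hb hba
    have h1 : a * Real.log a + b * Real.log b ≤ (a + b) * Real.log a := by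
      nlinarith
    have h2 : Real.log a < (1/2) * Real.log (a ^ 2 + b ^ 2) := by
      have : Real.log (a ^ 2) < Real.log (a ^ 2 + b ^ 2) := by
        apply Real.log_lt_log (by positivity); nlinarith
      rw [Real.log_pow] at this
      push_cast at this
      linarith
    calc (1 / (a + b)) * (a * Real.log a + b * Real.log b)
        ≤ (1 / (a + b)) * ((a + b) * Real.log a) := by
          apply mul_le_mul_of_nonneg_left h1; positivity
      _ = Real.log a := by field_simp
      _ < 1 / 2 * Real.log (a ^ 2 + b ^ 2) := by linarith

theorem A2_lt_S_lt (a b : ℝ) (ha : 0 < a) (hb : 0 < b) (hab : a ≠ b) :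
    ((a ^ 2 + b ^ 2) / 2) ^ ((1 : ℝ) / 2) < (a ^ a * b ^ b) ^ (1 / (a + b)) ∧
      (a ^ a * b ^ b) ^ (1 / (a + b)) <
        Real.sqrt 2 * ((a ^ 2 + b ^ 2) / 2) ^ ((1 : ℝ) / 2) := by
  rcases hab.lt_or_gt with h | h
  · have := main_half b a hb ha h
    rw [add_comm (b^2) (a^2), add_comm b a, mul_comm (b ^ b) (a ^ a)] at this
    exact this
  · exact main_half a b ha hb h
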